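/- Let φ ∈ ℝ^{m×n} have all entries in [0, 2/m], and let f_1,...,f_n ∈ ℝ^n be vectors such that the matrix n·(f_1, f_2−f_1, ..., f_n−f_1) equals the n×n Hadamard matrix H. If n > 4, then there exists an index i with 1 < i ≤ n such that ‖φ(f_i − f_1)‖₁ ≤ 2/√n. -/

import Mathlib

/-- The `n × n` Hadamard matrix, `H i j = (-1)^{⟨i, j⟩ mod 2}` where `i, j` are
viewed as binary strings (intended for `n` a power of two). -/
noncomputable def hadamard (n : ℕ) : Matrix (Fin n) (Fin n) ℝ := fun i j =>
  (-1 : ℝ) ^ ((Finset.range n).filter (fun b => i.val.testBit b ∧ j.val.testBit b)).card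

/-- If `φ ∈ ℝ^{m×n}` has entries in `[0, 2/m]` and `f₁, …, f_n ∈ ℝ^n` are such that
`n · (f₁, f₂ - f₁, …, f_n - f₁)` equals the `n × n` Hadamard matrix `H` (`n = 2^d`,
`n > 4`), then some index `i ≠ 1` satisfies `‖φ(f_i - f₁)‖₁ ≤ 2/√n`. -/

lemma had_prod (n : ℕ) (x i : Fin n) :
    hadamard n x i
      = ∏ b ∈ Finset.range n, (if x.val.testBit b ∧ i.val.testBit b then (-1:ℝ) else 1) := by
  rw [Finset.prod_ite, Finset.prod_const, Finset.prod_const, one_pow, mul_one]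
  rfl

lemma had_symm (n : ℕ) (x i : Fin n) : hadamard n x i = hadamard n i x := by
  unfold hadamard
  congr 2
  ext b
  simp [Finset.mem_filter, and_comm]

lemma had_sq (n : ℕ) (x i : Fin n) : hadamard n x i * hadamard n x i = 1 := by
  unfold hadamard
  rw [← pow_add, ← two_mul, pow_mul]
  norm_num

lemma had_zero (n : ℕ) (h : 0 < n) (x : Fin n) : hadamard n x ⟨0, h⟩ = 1 := by
  simp [hadamard, Nat.zero_testBit]

lemma had_mul (d : ℕ) (x i j : Fin (2^d)) :
    hadamard (2^d) x i * hadamard (2^d) x j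
      = hadamard (2^d) x ⟨i.val ^^^ j.val, Nat.xor_lt_two_pow i.isLt j.isLt⟩ := by
  simp only [had_prod, ← Finset.prod_mul_distrib]
  refine Finset.prod_congr rfl fun b _ => ?_
  simp only [Nat.testBit_xor]
  cases hx : x.val.testBit b <;> cases hi : i.val.testBit b <;> cases hj : j.val.testBit b <;> simp

lemma had_sum_zero (d : ℕ) (k : Fin (2^d)) (hk : k.val ≠ 0) :
    ∑ x : Fin (2^d), hadamard (2^d) x k = 0 := by
  obtain ⟨b, hb⟩ : ∃ b, k.val.testBit b = true := by
    by_contra hc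
    push_neg at hc
    apply hk
    apply Nat.eq_of_testBit_eq
    intro b
    simp only [Nat.zero_testBit]
    exact Bool.eq_false_iff.2 (hc b)
  have hbd : b < d := by
    have h1 : 2^b ≤ k.val := Nat.ge_two_pow_of_testBit hb
    have h2 : k.val < 2^d := k.isLt
    have := lt_of_le_of_lt h1 h2
    exact (Nat.pow_lt_pow_iff_right one_lt_two).1 this
  have hb2 : (2:ℕ)^b < 2^d := Nat.pow_lt_pow_right one_lt_two hbd
  set σ : Equiv.Perm (Fin (2^d)) :=
    ⟨fun x => ⟨x.val ^^^ 2^b, Nat.xor_lt_two_pow x.isLt hb2⟩,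
     fun x => ⟨x.val ^^^ 2^b, Nat.xor_lt_two_pow x.isLt hb2⟩,
     fun x => by simp [xor_cancel_right],
     fun x => by simp [xor_cancel_right]⟩ with hσ
  have hbS : b ∈ Finset.range (2^d) := Finset.mem_range.2 (lt_of_lt_of_le hbd (Nat.le_of_lt (Nat.lt_two_pow_self)))
  have key : ∀ x : Fin (2^d), hadamard (2^d) (σ x) k = - hadamard (2^d) x k := by
    intro x
    rw [had_prod, had_prod, ← Finset.mul_prod_erase _ _ hbS, ← Finset.mul_prod_erase _ _ hbS]
    have hrest : ∏ b' ∈ (Finset.range (2^d)).erase b,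
        (if (σ x).val.testBit b' ∧ k.val.testBit b' then (-1:ℝ) else 1)
        = ∏ b' ∈ (Finset.range (2^d)).erase b,
        (if x.val.testBit b' ∧ k.val.testBit b' then (-1:ℝ) else 1) := by
      refine Finset.prod_congr rfl fun b' hb' => ?_
      have hne : b' ≠ b := (Finset.mem_erase.1 hb').1
      have : (σ x).val.testBit b' = x.val.testBit b' := by
        show (x.val ^^^ 2^b).testBit b' = _
        simp [Nat.testBit_xor, Nat.testBit_two_pow, Ne.symm hne]
      rw [this]
    rw [hrest]
    have hflip : (σ x).val.testBit b = !x.val.testBit b := by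
      show (x.val ^^^ 2^b).testBit b = _
      simp [Nat.testBit_xor, Nat.testBit_two_pow]
    rw [hflip, hb]
    cases x.val.testBit b <;> simp <;> ring
  have hsum := Equiv.sum_comp σ (fun x => hadamard (2^d) x k)
  have : ∑ x : Fin (2^d), hadamard (2^d) x k = - ∑ x : Fin (2^d), hadamard (2^d) x k := by
    calc ∑ x : Fin (2^d), hadamard (2^d) x k
        = ∑ x : Fin (2^d), hadamard (2^d) (σ x) k := hsum.symm
      _ = ∑ x : Fin (2^d), - hadamard (2^d) x k := Finset.sum_congr rfl fun x _ => key x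
      _ = - ∑ x : Fin (2^d), hadamard (2^d) x k := by rw [Finset.sum_neg_distrib]
  linarith

lemma had_orth (d : ℕ) (x y : Fin (2^d)) :
    ∑ i : Fin (2^d), hadamard (2^d) x i * hadamard (2^d) y i
      = if x = y then (2^d : ℝ) else 0 := by
  simp only [had_symm (2^d) x, had_symm (2^d) y]
  split
  · next h =>
    subst h
    simp [had_sq]
  · next h =>
    rw [Finset.sum_congr rfl fun i _ => had_mul d i x y]
    apply had_sum_zero
    simp only [ne_eq]
    intro hc
    exact h (Fin.ext (xor_eq_zero_iff.1 hc))

theorem stmt_19 (d m : ℕ) (hm : 0 < m) (hn : 4 < 2 ^ d)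
    (φ : Matrix (Fin m) (Fin (2 ^ d)) ℝ)
    (hφ : ∀ i j, φ i j ∈ Set.Icc (0 : ℝ) (2 / m))
    (f : Fin (2 ^ d) → Fin (2 ^ d) → ℝ)
    (hf0 : ∀ x, (2 ^ d : ℝ) * f ⟨0, by positivity⟩ x = hadamard (2 ^ d) x ⟨0, by positivity⟩)
    (hf : ∀ i : Fin (2 ^ d), i ≠ ⟨0, by positivity⟩ →
      ∀ x, (2 ^ d : ℝ) * (f i x - f ⟨0, by positivity⟩ x) = hadamard (2 ^ d) x i) :
    ∃ i : Fin (2 ^ d), i ≠ ⟨0, by positivity⟩ ∧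
      ∑ r, |φ.mulVec (fun x => f i x - f ⟨0, by positivity⟩ x) r| ≤
        2 / Real.sqrt (2 ^ d) := by

  have hn0 : (0:ℕ) < 2^d := by omega
  set i0 : Fin (2^d) := ⟨0, hn0⟩ with hi0def
  set N : ℝ := (2^d : ℝ) with hNdef
  have hN : (4:ℝ) < N := by rw [hNdef]; exact_mod_cast hn
  have hN0 : (0:ℝ) < N := by linarith
  have hm' : (0:ℝ) < m := by exact_mod_cast hm
  set u : Fin (2^d) → Fin m → ℝ := fun i r => ∑ x, φ r x * hadamard (2^d) x i with hu
  -- Parseval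
  have hA : ∑ i, ∑ r, (u i r)^2 = N * ∑ r, ∑ x, (φ r x)^2 := by
    rw [Finset.sum_comm, Finset.mul_sum]
    refine Finset.sum_congr rfl fun r _ => ?_
    calc ∑ i, (u i r)^2
        = ∑ i, ∑ x, ∑ y, (φ r x * φ r y) * (hadamard (2^d) x i * hadamard (2^d) y i) := by
          refine Finset.sum_congr rfl fun i _ => ?_
          rw [sq, hu]
          rw [Finset.sum_mul_sum]
          exact Finset.sum_congr rfl fun x _ => Finset.sum_congr rfl fun y _ => by ring
      _ = ∑ x, ∑ y, (φ r x * φ r y) * ∑ i, (hadamard (2^d) x i * hadamard (2^d) y i) := by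
          rw [Finset.sum_comm]
          refine Finset.sum_congr rfl fun x _ => ?_
          rw [Finset.sum_comm]
          refine Finset.sum_congr rfl fun y _ => ?_
          rw [Finset.mul_sum]
      _ = ∑ x, ∑ y, (φ r x * φ r y) * (if x = y then N else 0) := by
          simp_rw [had_orth]; rfl
      _ = N * ∑ x, (φ r x)^2 := by
          simp only [mul_ite, mul_zero, Finset.sum_ite_eq, Finset.mem_univ, if_true]
          rw [Finset.mul_sum]
          exact Finset.sum_congr rfl fun x _ => by ring
  -- column zero
  have hcol0 : ∀ r, u i0 r = ∑ x, φ r x := by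
    intro r
    rw [hu]
    refine Finset.sum_congr rfl fun x _ => ?_
    rw [had_zero (2^d) hn0 x, mul_one]
  set T : ℝ := ∑ r, ∑ x, φ r x with hT
  set F : ℝ := ∑ r, ∑ x, (φ r x)^2 with hF
  -- entry bounds
  have hφ0 : ∀ r x, 0 ≤ φ r x := fun r x => (hφ r x).1
  have hφ2 : ∀ r x, φ r x ≤ 2/m := fun r x => (hφ r x).2
  have hT0 : 0 ≤ T := Finset.sum_nonneg fun r _ => Finset.sum_nonneg fun x _ => hφ0 r x
  have hFle : F ≤ (2/m) * T := by
    rw [hF, hT, Finset.mul_sum]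
    refine Finset.sum_le_sum fun r _ => ?_
    rw [Finset.mul_sum]
    refine Finset.sum_le_sum fun x _ => ?_
    have := hφ0 r x
    have := hφ2 r x
    nlinarith
  -- row sums Cauchy-Schwarz
  have hCS : T^2 ≤ (m:ℝ) * ∑ r, (∑ x, φ r x)^2 := by
    have := sq_sum_le_card_mul_sum_sq (s := (Finset.univ : Finset (Fin m)))
      (f := fun r => ∑ x, φ r x)
    simpa using this
  -- total over nonzero columns
  have hB : ∑ i ∈ Finset.univ.erase i0, ∑ r, (u i r)^2
      = N * F - ∑ r, (∑ x, φ r x)^2 := by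
    rw [Finset.sum_erase_eq_sub (Finset.mem_univ i0), hA]
    congr 1
    exact Finset.sum_congr rfl fun r _ => by rw [hcol0 r]
  have hBle : ∑ i ∈ Finset.univ.erase i0, ∑ r, (u i r)^2 ≤ N^2 / m := by
    rw [hB]
    have h1 : N * F ≤ N * ((2/m) * T) := by
      apply mul_le_mul_of_nonneg_left hFle hN0.le
    have h2 : T^2 / m ≤ ∑ r, (∑ x, φ r x)^2 := by
      rw [div_le_iff₀ hm']
      calc T^2 ≤ (m:ℝ) * ∑ r, (∑ x, φ r x)^2 := hCS
        _ = (∑ r, (∑ x, φ r x)^2) * m := by ring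
    have h3 : N * ((2/m)*T) - T^2/m ≤ N^2/m := by
      rw [show N*((2/m)*T) - T^2/m = (2*N*T - T^2)/m by field_simp]
      have key : 2*N*T - T^2 ≤ N^2 := by nlinarith [sq_nonneg (N - T)]
      exact (div_le_div_iff_of_pos_right hm').2 key
    linarith
  -- averaging
  have hNm1 : (0:ℝ) < N - 1 := by linarith
  have hne : (Finset.univ.erase i0).Nonempty := by
    refine ⟨⟨1, by omega⟩, Finset.mem_erase.2 ⟨?_, Finset.mem_univ _⟩⟩
    simp [hi0def, Fin.ext_iff]
  have hcard : (((Finset.univ.erase i0) : Finset (Fin (2^d))).card : ℝ) = N - 1 := by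
    rw [Finset.card_erase_of_mem (Finset.mem_univ _), Finset.card_univ, Fintype.card_fin]
    have h1 : (1:ℕ) ≤ 2^d := by omega
    rw [Nat.cast_sub h1]
    push_cast
    rw [hNdef]
  have hsum_const : ∑ _i ∈ Finset.univ.erase i0, N^2/(m*(N-1)) = N^2/m := by
    rw [Finset.sum_const, nsmul_eq_mul, hcard]
    field_simp
  obtain ⟨i, hi_mem, hi_le⟩ :=
    Finset.exists_le_of_sum_le (f := fun i => ∑ r, (u i r)^2)
      (g := fun _ => N^2/(m*(N-1))) hne (by rw [hsum_const]; exact hBle)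
  have hi_ne : i ≠ i0 := (Finset.mem_erase.1 hi_mem).1
  refine ⟨i, hi_ne, ?_⟩
  have hgi : ∀ x, f i x - f i0 x = hadamard (2^d) x i / N := by
    intro x
    rw [eq_div_iff hN0.ne', mul_comm]
    exact hf i hi_ne x
  have hmv : ∀ r, φ.mulVec (fun x => f i x - f i0 x) r = u i r / N := by
    intro r
    show ∑ x, φ r x * (f i x - f i0 x) = u i r / N
    simp_rw [hgi, ← mul_div_assoc]
    rw [← Finset.sum_div]
  set S1 : ℝ := ∑ r, |u i r| with hS1def
  have hS1nn : 0 ≤ S1 := Finset.sum_nonneg fun r _ => abs_nonneg _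
  have hS1sq : S1^2 ≤ (m:ℝ) * ∑ r, (u i r)^2 := by
    have h := sq_sum_le_card_mul_sum_sq (s := (Finset.univ : Finset (Fin m)))
      (f := fun r => |u i r|)
    simp only [sq_abs, Finset.card_univ, Fintype.card_fin] at h
    exact h
  have hmS2 : (m:ℝ) * (∑ r, (u i r)^2) ≤ N^2/(N-1) := by
    calc (m:ℝ) * (∑ r, (u i r)^2) ≤ m * (N^2/(m*(N-1))) :=
          mul_le_mul_of_nonneg_left hi_le hm'.le
      _ = N^2/(N-1) := by field_simp
  have hS1sq' : S1^2 ≤ N^2/(N-1) := le_trans hS1sq hmS2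
  have hfin : S1^2/N^2 ≤ 4/N := by
    have h1 : S1^2/N^2 ≤ (N^2/(N-1))/N^2 := (div_le_div_iff_of_pos_right (pow_pos hN0 2)).2 hS1sq'
    have h2 : (N^2/(N-1))/N^2 = 1/(N-1) := by
      field_simp
    have h3 : 1/(N-1) ≤ 4/N := by
      rw [div_le_div_iff₀ hNm1 hN0]; linarith
    linarith
  have hgoal_sq : (S1/N)^2 ≤ (2/Real.sqrt N)^2 := by
    rw [div_pow, div_pow, Real.sq_sqrt hN0.le]
    norm_num
    linarith [hfin]
  have hfinal : S1/N ≤ 2/Real.sqrt N := by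
    have h2 : (0:ℝ) ≤ 2/Real.sqrt N := by positivity
    have h1 : (0:ℝ) ≤ S1/N := by positivity
    have h := Real.sqrt_le_sqrt hgoal_sq
    rwa [Real.sqrt_sq h1, Real.sqrt_sq h2] at h
  calc ∑ r, |φ.mulVec (fun x => f i x - f i0 x) r| = ∑ r, |u i r| / N := by
        refine Finset.sum_congr rfl fun r _ => ?_
        rw [hmv r, abs_div, abs_of_pos hN0]
    _ = S1 / N := by rw [← Finset.sum_div]
    _ ≤ 2/Real.sqrt N := hfinal
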